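/- Let h : X → ℝ be convex and differentiable with L-Lipschitz gradient, let K : X → Y be a bounded linear operator with ‖K‖ ≤ L_K, and set L̂ := max{L, L_K}. Let α > 0, δ ∈ (0,1], β > 0, M ∈ S_α(X), and let σ > 0 satisfy σ ≤ (−1 + √(1 + 4δα/β))/(2L̂), and set τ := βσ. Then for all x, x' ∈ X: τσ‖Kx' − Kx‖² + 2τ( h(x') − h(x) − ⟨∇h(x), x' − x⟩ ) ≤ δ‖x' − x‖²_M. In particular, the line-search (breaking) condition of Algorithm 1 is satisfied for every sufficiently small step size, so the line search terminates after finitely many trials. -/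

import Mathlib

open scoped RealInnerProductSpace

lemma descent_lemma {X : Type*} [NormedAddCommGroup X] [InnerProductSpace ℝ X] [CompleteSpace X]
    (h : X → ℝ) (h' : X → X) (C : ℝ)
    (hgrad : ∀ z : X, HasGradientAt h (h' z) z)
    (hLip : ∀ u v : X, ‖h' u - h' v‖ ≤ C * ‖u - v‖)
    (x x' : X) :
    h x' - h x - ⟪h' x, x' - x⟫ ≤ C / 2 * ‖x' - x‖ ^ 2 := by
  set d := x' - x with hd
  have hcurve : ∀ t : ℝ, HasDerivAt (fun s : ℝ => h (x + s • d)) ⟪h' (x + t • d), d⟫ t := by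
    intro t
    have h1 : HasDerivAt (fun s : ℝ => x + s • d) d t := by
      simpa using ((hasDerivAt_id t).smul_const d).const_add x
    have h2 := ((hgrad (x + t • d)).hasFDerivAt).comp_hasDerivAt t h1
    exact h2
  have hconth' : Continuous h' := by
    have : LipschitzWith (Real.toNNReal |C|) h' := by
      apply LipschitzWith.of_dist_le_mul
      intro u v
      have := hLip u v
      have h2 : C * ‖u - v‖ ≤ |C| * ‖u - v‖ :=
        mul_le_mul_of_nonneg_right (le_abs_self C) (norm_nonneg _)
      simp only [dist_eq_norm]
      calc ‖h' u - h' v‖ ≤ |C| * ‖u - v‖ := le_trans this h2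
        _ = (Real.toNNReal |C| : ℝ) * ‖u - v‖ := by
            rw [Real.coe_toNNReal _ (abs_nonneg C)]
    exact this.continuous
  have hcont : Continuous fun t : ℝ => ⟪h' (x + t • d), d⟫ := by
    apply Continuous.inner
    · exact hconth'.comp (by continuity)
    · exact continuous_const
  have key : h (x + (1:ℝ) • d) - h (x + (0:ℝ) • d)
      = ∫ t in (0:ℝ)..1, ⟪h' (x + t • d), d⟫ :=
    (intervalIntegral.integral_eq_sub_of_hasDerivAt (fun t _ => hcurve t)
      (hcont.intervalIntegrable 0 1)).symm
  have key' : h x' - h x = ∫ t in (0:ℝ)..1, ⟪h' (x + t • d), d⟫ := by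
    simpa [hd] using key
  have hmono : (∫ t in (0:ℝ)..1, ⟪h' (x + t • d), d⟫ - ⟪h' x, d⟫)
      ≤ ∫ t in (0:ℝ)..1, C * t * ‖d‖ ^ 2 := by
    apply intervalIntegral.integral_mono_on (by norm_num)
    · exact ((hcont.sub continuous_const).intervalIntegrable 0 1)
    · exact ((by continuity : Continuous fun t : ℝ => C * t * ‖d‖ ^ 2).intervalIntegrable 0 1)
    · intro t ht
      have ht0 : 0 ≤ t := ht.1
      have h1 : ⟪h' (x + t • d), d⟫ - ⟪h' x, d⟫ = ⟪h' (x + t • d) - h' x, d⟫ := by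
        rw [inner_sub_left]
      rw [h1]
      calc ⟪h' (x + t • d) - h' x, d⟫ ≤ ‖h' (x + t • d) - h' x‖ * ‖d‖ :=
            real_inner_le_norm _ _
        _ ≤ (C * ‖(x + t • d) - x‖) * ‖d‖ :=
            mul_le_mul_of_nonneg_right (hLip _ _) (norm_nonneg _)
        _ = C * t * ‖d‖ ^ 2 := by
            rw [show (x + t • d) - x = t • d by abel, norm_smul]
            simp [abs_of_nonneg ht0]
            ring
  have hint1 : (∫ t in (0:ℝ)..1, ⟪h' (x + t • d), d⟫ - ⟪h' x, d⟫)
      = (∫ t in (0:ℝ)..1, ⟪h' (x + t • d), d⟫) - ⟪h' x, d⟫ := by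
    rw [intervalIntegral.integral_sub (hcont.intervalIntegrable 0 1)
      intervalIntegrable_const]
    simp
  have hint2 : (∫ t in (0:ℝ)..1, C * t * ‖d‖ ^ 2) = C / 2 * ‖d‖ ^ 2 := by
    have : (∫ t in (0:ℝ)..1, C * t * ‖d‖ ^ 2)
        = (C * ‖d‖ ^ 2) * ∫ t in (0:ℝ)..1, t := by
      rw [← intervalIntegral.integral_const_mul]
      congr 1; ext t; ring
    rw [this, integral_id]
    ring
  rw [key']
  rw [hint1, hint2] at hmono
  linarith

/-- If `h` is convex with `L`-Lipschitz gradient, `‖K‖ ≤ L_K`,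
`L̂ = max{L, L_K}`, `M ∈ S_α(X)`, `δ ∈ (0,1]`, `β > 0`, `0 < σ ≤ (−1+√(1+4δα/β))/(2L̂)`
and `τ = βσ`, then the line-search (breaking) condition of Algorithm 1 holds for all
`x, x'`. -/
theorem lineSearchCondition_of_small_step
    {X Y : Type*} [NormedAddCommGroup X] [InnerProductSpace ℝ X] [FiniteDimensional ℝ X]
    [NormedAddCommGroup Y] [InnerProductSpace ℝ Y] [FiniteDimensional ℝ Y]
    (h : X → ℝ) (h' : X → X) (L : ℝ)
    (hconv : ConvexOn ℝ Set.univ h)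
    (hgrad : ∀ z : X, HasGradientAt h (h' z) z)
    (hLip : ∀ u v : X, ‖h' u - h' v‖ ≤ L * ‖u - v‖)
    (K : X →L[ℝ] Y) (LK : ℝ) (hK : ‖K‖ ≤ LK)
    (α δ β : ℝ) (hα : 0 < α) (hδ : δ ∈ Set.Ioc (0 : ℝ) 1) (hβ : 0 < β)
    (M : X →L[ℝ] X)
    (hMsa : ∀ u v : X, ⟪M u, v⟫ = ⟪u, M v⟫)
    (hMα : ∀ z : X, α * ‖z‖ ^ 2 ≤ ⟪M z, z⟫)
    (σ τ : ℝ) (hσ : 0 < σ)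
    (hσle : σ ≤ (-1 + Real.sqrt (1 + 4 * δ * α / β)) / (2 * max L LK))
    (hτ : τ = β * σ) :
    ∀ x x' : X,
      τ * σ * ‖K x' - K x‖ ^ 2
          + 2 * τ * (h x' - h x - ⟪h' x, x' - x⟫)
        ≤ δ * ⟪M (x' - x), x' - x⟫ := by
  obtain ⟨hδ0, hδ1⟩ := hδ
  set Lh := max L LK with hLh
  have hLK0 : 0 ≤ LK := le_trans (norm_nonneg K) hK
  have hLh0 : 0 ≤ Lh := le_trans hLK0 (le_max_right _ _)
  have hLhpos : 0 < Lh := by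
    rcases hLh0.lt_or_eq with hp | hz
    · exact hp
    · exfalso
      rw [← hz] at hσle
      norm_num at hσle
      linarith
  clear_value Lh
  have hcpos : (0:ℝ) < 1 + 4 * δ * α / β := by positivity
  -- scalar inequality
  have h1 : 2 * σ * Lh + 1 ≤ Real.sqrt (1 + 4 * δ * α / β) := by
    rw [le_div_iff₀ (by positivity)] at hσle
    linarith
  have h2 : (2 * σ * Lh + 1) ^ 2 ≤ 1 + 4 * δ * α / β := by
    calc (2 * σ * Lh + 1) ^ 2 ≤ (Real.sqrt (1 + 4 * δ * α / β)) ^ 2 :=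
          pow_le_pow_left₀ (by positivity) h1 2
      _ = 1 + 4 * δ * α / β := Real.sq_sqrt hcpos.le
  have hscalar : β * (σ * Lh) ^ 2 + β * (σ * Lh) ≤ δ * α := by
    have hexp : (2 * σ * Lh + 1) ^ 2 = 4 * (σ * Lh) ^ 2 + 4 * (σ * Lh) + 1 := by ring
    have h3 : 4 * ((σ * Lh) ^ 2 + σ * Lh) ≤ 4 * (δ * α / β) := by
      rw [hexp] at h2; ring_nf at h2 ⊢; linarith
    have h4 : (σ * Lh) ^ 2 + σ * Lh ≤ δ * α / β := by linarith
    calc β * (σ * Lh) ^ 2 + β * (σ * Lh) = β * ((σ * Lh) ^ 2 + σ * Lh) := by ring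
      _ ≤ β * (δ * α / β) := by
          exact mul_le_mul_of_nonneg_left h4 hβ.le
      _ = δ * α := by field_simp
  intro x x'
  set d := x' - x with hd
  have hLipLh : ∀ u v : X, ‖h' u - h' v‖ ≤ Lh * ‖u - v‖ := fun u v =>
    le_trans (hLip u v) (mul_le_mul_of_nonneg_right (hLh ▸ le_max_left L LK) (norm_nonneg _))
  have hdesc := descent_lemma h h' Lh hgrad hLipLh x x'
  have hKd : ‖K x' - K x‖ ≤ Lh * ‖d‖ := by
    calc ‖K x' - K x‖ = ‖K d‖ := by rw [hd, map_sub]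
      _ ≤ ‖K‖ * ‖d‖ := K.le_opNorm d
      _ ≤ Lh * ‖d‖ := by
          apply mul_le_mul_of_nonneg_right _ (norm_nonneg _)
          exact le_trans hK (hLh ▸ le_max_right L LK)
  have hKd2 : ‖K x' - K x‖ ^ 2 ≤ Lh ^ 2 * ‖d‖ ^ 2 := by
    calc ‖K x' - K x‖ ^ 2 ≤ (Lh * ‖d‖) ^ 2 := pow_le_pow_left₀ (norm_nonneg _) hKd 2
      _ = Lh ^ 2 * ‖d‖ ^ 2 := by ring
  have hM := hMα d
  rw [hτ]
  nlinarith [sq_nonneg ‖d‖, mul_pos hσ hσ,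
    mul_le_mul_of_nonneg_left hKd2 (by positivity : (0:ℝ) ≤ β * σ * σ),
    mul_le_mul_of_nonneg_left hdesc (by positivity : (0:ℝ) ≤ 2 * (β * σ)),
    mul_le_mul_of_nonneg_right hscalar (sq_nonneg ‖d‖),
    mul_le_mul_of_nonneg_left hM hδ0.le]
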